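/- Let G be a finite simple graph with minimum degree δ > 6 and edge-connectivity λ ≤ δ. If W ⊆ V(G) satisfies |W| ≥ 3 and d(W) ≤ 2λ, then |W| ≥ δ − 1. -/

import Mathlib

open scoped Classical

/-- `d(X)`: the number of edges of `G` with exactly one endpoint in `X`.
Each crossing edge `uv` (with `u ∈ X`, `v ∉ X`) is counted once, as the
ordered pair `(u, v)`. -/
noncomputable def cutSize {V : Type*} [Fintype V] (G : SimpleGraph V)
    (X : Finset V) : ℕ :=
  (Finset.univ.filter fun p : V × V => p.1 ∈ X ∧ p.2 ∉ X ∧ G.Adj p.1 p.2).card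

/-- `lam` is the edge-connectivity of `G`: the minimum of `d(X)` over all
`∅ ≠ X ⊊ V`. -/
def IsEdgeConn {V : Type*} [Fintype V] (G : SimpleGraph V) (lam : ℕ) : Prop :=
  (∀ X : Finset V, X.Nonempty → X ≠ Finset.univ → lam ≤ cutSize G X) ∧
  ∃ X : Finset V, X.Nonempty ∧ X ≠ Finset.univ ∧ cutSize G X = lam

/-- `X` is a min-cut of `G` (whose edge-connectivity is `lam`). -/
def IsMinCut {V : Type*} [Fintype V] (G : SimpleGraph V) (lam : ℕ)
    (X : Finset V) : Prop :=
  X.Nonempty ∧ X ≠ Finset.univ ∧ cutSize G X = lam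

/-- `X` is a non-trivial min-cut: a min-cut with `2 ≤ |X| ≤ |V| - 2`. -/
def IsNontrivialMinCut {V : Type*} [Fintype V] (G : SimpleGraph V) (lam : ℕ)
    (X : Finset V) : Prop :=
  IsMinCut G lam X ∧ 2 ≤ X.card ∧ X.card ≤ Fintype.card V - 2

/-- Let `G` be a finite simple graph with minimum degree
`δ > 6` and edge-connectivity `λ ≤ δ`. If `W ⊆ V(G)` satisfies `|W| ≥ 3` and
`d(W) ≤ 2λ`, then `|W| ≥ δ − 1`. -/
theorem statement14 (V : Type) [Fintype V] (G : SimpleGraph V) (δ lam : ℕ)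
    (hδ : G.minDegree = δ) (h6 : 6 < δ)
    (hconn : IsEdgeConn G lam) (hlamδ : lam ≤ δ)
    (W : Finset V) (hW3 : 3 ≤ W.card) (hdW : cutSize G W ≤ 2 * lam) :
    δ - 1 ≤ W.card := by
  classical
  have hne : Nonempty V := by
    obtain ⟨v, hv⟩ := Finset.card_pos.mp (by omega : 0 < W.card)
    exact ⟨v⟩
  -- cutSize as a sum over W
  have hcut : cutSize G W = ∑ v ∈ W, (Finset.univ.filter fun w => w ∉ W ∧ G.Adj v w).card := by
    unfold cutSize
    rw [Finset.card_eq_sum_card_fiberwise (f := Prod.fst) (t := W)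
      (fun p hp => (Finset.mem_filter.mp hp).2.1)]
    refine Finset.sum_congr rfl fun v hv => ?_
    refine Finset.card_bij (fun p _ => p.2) ?_ ?_ ?_
    · intro p hp
      simp only [Finset.mem_filter, Finset.mem_univ, true_and] at hp ⊢
      obtain ⟨⟨h1, h2, h3⟩, h4⟩ := hp
      subst h4; exact ⟨h2, h3⟩
    · intro p hp q hq h
      simp only [Finset.mem_filter] at hp hq
      exact Prod.ext (hp.2.trans hq.2.symm) h
    · intro w hw
      simp only [Finset.mem_filter, Finset.mem_univ, true_and] at hw
      exact ⟨(v, w), by simp [hw, hv], rfl⟩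
  -- degree split
  have hdeg : ∀ v ∈ W, δ ≤ (W.erase v).card + (Finset.univ.filter fun w => w ∉ W ∧ G.Adj v w).card := by
    intro v hv
    have h1 : δ ≤ G.degree v := hδ ▸ G.minDegree_le_degree v
    have h2 : G.degree v = ((G.neighborFinset v).filter (· ∈ W)).card
        + ((G.neighborFinset v).filter (· ∉ W)).card := by
      rw [Finset.card_filter_add_card_filter_not, SimpleGraph.degree]
    have h3 : ((G.neighborFinset v).filter (· ∈ W)).card ≤ (W.erase v).card := by
      apply Finset.card_le_card
      intro w hw
      simp only [Finset.mem_filter, SimpleGraph.mem_neighborFinset] at hw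
      exact Finset.mem_erase.mpr ⟨fun h => G.loopless.irrefl v (h ▸ hw.1), hw.2⟩
    have h4 : ((G.neighborFinset v).filter (· ∉ W)).card
        = (Finset.univ.filter fun w => w ∉ W ∧ G.Adj v w).card := by
      congr 1
      ext w
      simp [SimpleGraph.mem_neighborFinset, and_comm]
    omega
  have hsum : δ * W.card ≤ W.card * (W.card - 1) + cutSize G W := by
    calc δ * W.card = ∑ _v ∈ W, δ := by rw [Finset.sum_const, smul_eq_mul, mul_comm]
    _ ≤ ∑ v ∈ W, ((W.erase v).card + (Finset.univ.filter fun w => w ∉ W ∧ G.Adj v w).card) :=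
        Finset.sum_le_sum hdeg
    _ = ∑ v ∈ W, (W.erase v).card + cutSize G W := by rw [Finset.sum_add_distrib, hcut]
    _ ≤ W.card * (W.card - 1) + cutSize G W := by
        refine Nat.add_le_add_right (le_of_eq ?_) _
        calc ∑ v ∈ W, (W.erase v).card = ∑ _v ∈ W, (W.card - 1) := by
              refine Finset.sum_congr rfl fun v hv => ?_
              rw [Finset.card_erase_of_mem hv]
        _ = W.card * (W.card - 1) := by rw [Finset.sum_const, smul_eq_mul]
  have hk : δ * W.card ≤ W.card * (W.card - 1) + 2 * δ := by omega
  set k := W.card with hkdef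
  by_contra hc
  push_neg at hc
  have hk2 : k + 2 ≤ δ := by omega
  have h1 : (k + 2) * k ≤ k * (k - 1) + 2 * δ := le_trans (Nat.mul_le_mul_right k hk2) hk
  have h2 : k * (k - 1) + k = k * k := by
    cases k with
    | zero => omega
    | succ n => rw [Nat.add_sub_cancel]; ring
  nlinarith [hk2, hW3, h1, h2]
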